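/- arXiv:1209.3632 — 5 statements merged into one kernel-verified Lean document; each statement's English description precedes it below -/
import Mathlib

section
/- If H is an n×n real infinitesimal stochastic matrix and t ≥ 0, then exp(tH) is a stochastic matrix: all its entries are nonnegative and each of its columns sums to 1. -/
open NormedSpace Nat

section aux

variable {n : ℕ}

private noncomputable def colSumMap (j : Fin n) :
    Matrix (Fin n) (Fin n) ℝ →ₗ[ℝ] ℝ :=
  ∑ i, Matrix.entryLinearMap ℝ ℝ i j

private lemma colSumMap_apply (j : Fin n) (M : Matrix (Fin n) (Fin n) ℝ) :
    colSumMap j M = ∑ i, M i j := by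
  simp [colSumMap]

private lemma pow_entry_nonneg {A : Matrix (Fin n) (Fin n) ℝ}
    (hA : ∀ i j, 0 ≤ A i j) (k : ℕ) : ∀ i j, 0 ≤ (A ^ k) i j := by
  induction k with
  | zero => intro i j; simp [Matrix.one_apply]; positivity
  | succ k ih =>
    intro i j
    rw [pow_succ, Matrix.mul_apply]
    exact Finset.sum_nonneg fun l _ => mul_nonneg (ih i l) (hA l j)

private lemma colSum_pow {A : Matrix (Fin n) (Fin n) ℝ}
    (hA : ∀ j, ∑ i, A i j = 0) (k : ℕ) : ∀ (j : Fin n),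
    ∑ i, (A ^ k) i j = if k = 0 then 1 else 0 := by
  induction k with
  | zero => intro j; simp [Matrix.one_apply]
  | succ k ih =>
    intro j
    simp only [Nat.succ_ne_zero, if_false]
    rw [pow_succ, show (A ^ k * A) = A ^ k * A from rfl]
    simp_rw [Matrix.mul_apply]
    rw [Finset.sum_comm]
    calc ∑ l, ∑ i, (A ^ k) i l * A l j
        = ∑ l, (∑ i, (A ^ k) i l) * A l j := by simp [Finset.sum_mul]
      _ = ∑ l, (if k = 0 then 1 else 0 : ℝ) * A l j := by
          refine Finset.sum_congr rfl fun l _ => ?_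
          rw [ih l]
      _ = 0 := by
          by_cases hk : k = 0
          · simp [hk, hA j]
          · simp [hk]

private lemma entry_exp_nonneg {A : Matrix (Fin n) (Fin n) ℝ}
    (hA : ∀ i j, 0 ≤ A i j) (i j : Fin n) : 0 ≤ exp A i j := by
  letI : SeminormedRing (Matrix (Fin n) (Fin n) ℝ) := Matrix.linftyOpSemiNormedRing
  letI : NormedRing (Matrix (Fin n) (Fin n) ℝ) := Matrix.linftyOpNormedRing
  letI : NormedAlgebra ℝ (Matrix (Fin n) (Fin n) ℝ) := Matrix.linftyOpNormedAlgebra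
  have hs : HasSum (fun k : ℕ => ((k ! : ℝ))⁻¹ • A ^ k) (exp A) := by
    rw [exp_eq_tsum ℝ]
    exact (expSeries_summable' (𝕂 := ℝ) A).hasSum
  have hs2 := hs.mapL (Matrix.entryLinearMap ℝ ℝ i j).toContinuousLinearMap
  refine hs2.nonneg fun k => ?_
  simp only [LinearMap.coe_toContinuousLinearMap', Matrix.entryLinearMap,
    LinearMap.coe_mk, AddHom.coe_mk, Matrix.smul_apply, smul_eq_mul]
  exact mul_nonneg (by positivity) (pow_entry_nonneg hA k i j)

private lemma colSum_exp {A : Matrix (Fin n) (Fin n) ℝ}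
    (hA : ∀ j, ∑ i, A i j = 0) (j : Fin n) : ∑ i, exp A i j = 1 := by
  letI : SeminormedRing (Matrix (Fin n) (Fin n) ℝ) := Matrix.linftyOpSemiNormedRing
  letI : NormedRing (Matrix (Fin n) (Fin n) ℝ) := Matrix.linftyOpNormedRing
  letI : NormedAlgebra ℝ (Matrix (Fin n) (Fin n) ℝ) := Matrix.linftyOpNormedAlgebra
  have hs : HasSum (fun k : ℕ => ((k ! : ℝ))⁻¹ • A ^ k) (exp A) := by
    rw [exp_eq_tsum ℝ]
    exact (expSeries_summable' (𝕂 := ℝ) A).hasSum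
  have hs2 := hs.mapL (colSumMap j).toContinuousLinearMap
  have heq : (fun k : ℕ => (colSumMap j).toContinuousLinearMap (((k ! : ℝ))⁻¹ • A ^ k))
      = fun k : ℕ => if k = 0 then (1 : ℝ) else 0 := by
    funext k
    rw [LinearMap.coe_toContinuousLinearMap', map_smul, colSumMap_apply, colSum_pow hA k j]
    by_cases hk : k = 0 <;> simp [hk]
  rw [heq] at hs2
  have := hs2.unique (hasSum_ite_eq (0 : ℕ) (1 : ℝ))
  rw [LinearMap.coe_toContinuousLinearMap', colSumMap_apply] at this
  linarith

end aux

/-- If `H` is infinitesimal stochastic and `t ≥ 0`, then `exp (t • H)` is a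
stochastic matrix: nonnegative entries and each column sums to 1. -/
theorem exp_infinitesimalStochastic_isStochastic {n : ℕ} (H : Matrix (Fin n) (Fin n) ℝ)
    (hsum : ∀ j, ∑ i, H i j = 0)
    (hoff : ∀ i j, i ≠ j → 0 ≤ H i j)
    (t : ℝ) (ht : 0 ≤ t) :
    (∀ i j, 0 ≤ NormedSpace.exp (t • H) i j) ∧
      (∀ j, ∑ i, NormedSpace.exp (t • H) i j = 1) := by
  constructor
  · -- nonnegativity
    set c : ℝ := ∑ i, |H i i| with hc_def
    have hc0 : ∀ i : Fin n, 0 ≤ H i i + c := by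
      intro i
      have h1 : |H i i| ≤ c :=
        Finset.single_le_sum (f := fun i => |H i i|) (fun _ _ => abs_nonneg _)
          (Finset.mem_univ i)
      have h2 := neg_abs_le (H i i)
      linarith
    set B : Matrix (Fin n) (Fin n) ℝ := H + c • (1 : Matrix (Fin n) (Fin n) ℝ) with hB_def
    have hB : ∀ i j, 0 ≤ B i j := by
      intro i j
      by_cases h : i = j
      · subst h
        simpa [hB_def, Matrix.one_apply] using hc0 i
      · simpa [hB_def, Matrix.one_apply, h] using hoff i j h
    have htB : ∀ i j, 0 ≤ (t • B) i j := fun i j =>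
      mul_nonneg ht (hB i j)
    have hsplit : t • H = t • B + (-(t * c)) • (1 : Matrix (Fin n) (Fin n) ℝ) := by
      rw [hB_def, smul_add, smul_smul, add_assoc, ← add_smul]
      simp
    have hcomm : Commute (t • B) ((-(t * c)) • (1 : Matrix (Fin n) (Fin n) ℝ)) :=
      ((Commute.one_right (t • B)).smul_right _)
    have hexp1 : NormedSpace.exp ((-(t * c)) • (1 : Matrix (Fin n) (Fin n) ℝ))
        = Real.exp (-(t * c)) • (1 : Matrix (Fin n) (Fin n) ℝ) := by
      letI : SeminormedRing (Matrix (Fin n) (Fin n) ℝ) := Matrix.linftyOpSemiNormedRing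
      letI : NormedRing (Matrix (Fin n) (Fin n) ℝ) := Matrix.linftyOpNormedRing
      letI : NormedAlgebra ℝ (Matrix (Fin n) (Fin n) ℝ) := Matrix.linftyOpNormedAlgebra
      have h1 : ((-(t * c)) • (1 : Matrix (Fin n) (Fin n) ℝ))
          = algebraMap ℝ (Matrix (Fin n) (Fin n) ℝ) (-(t * c)) :=
        (Algebra.algebraMap_eq_smul_one _).symm
      rw [h1]
      have h2 := algebraMap_exp_comm (𝔸 := Matrix (Fin n) (Fin n) ℝ) (-(t * c))
      rw [Algebra.algebraMap_eq_smul_one, ← Real.exp_eq_exp_ℝ] at h2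
      exact h2.symm
    intro i j
    rw [hsplit, Matrix.exp_add_of_commute _ _ hcomm, hexp1, Matrix.mul_smul,
      Matrix.mul_one, Matrix.smul_apply, smul_eq_mul]
    exact mul_nonneg (Real.exp_nonneg _) (entry_exp_nonneg htB i j)
  · intro j
    refine colSum_exp (fun j' => ?_) j
    simp only [Matrix.smul_apply, smul_eq_mul, ← Finset.mul_sum, hsum j', mul_zero]
end

section
/- (Stochastic Noether theorem, forward direction) Let H be an n×n infinitesimal stochastic matrix and O a diagonal real matrix (an observable). If O commutes with H, then for any solution ψ(t) of the master equation dψ/dt = Hψ, the expected value ∑_i (O^k ψ(t))_i of every power O^k is constant in time. -/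
lemma sumH_zero {n : ℕ} (H : Matrix (Fin n) (Fin n) ℝ)
    (hsum : ∀ j, ∑ i, H i j = 0) (v : Fin n → ℝ) :
    ∑ i, (H.mulVec v) i = 0 := by
  simp only [Matrix.mulVec, dotProduct]
  rw [Finset.sum_comm]
  simp only [← Finset.sum_mul, hsum, zero_mul, Finset.sum_const_zero]

/-- Stochastic Noether theorem, forward direction: if an observable (diagonal
matrix) `O` commutes with an infinitesimal stochastic `H`, then the expected
value of every power `O^k` is constant along solutions of the master equation. -/
theorem stochastic_noether_forward {n : ℕ} (H : Matrix (Fin n) (Fin n) ℝ)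
    (hsum : ∀ j, ∑ i, H i j = 0)
    (hoff : ∀ i j, i ≠ j → 0 ≤ H i j)
    (o : Fin n → ℝ)
    (hcomm : Matrix.diagonal o * H = H * Matrix.diagonal o)
    (ψ : ℝ → (Fin n → ℝ))
    (hψ : ∀ t, HasDerivAt ψ (H.mulVec (ψ t)) t) :
    ∀ (k : ℕ) (s t : ℝ),
      ∑ i, ((Matrix.diagonal o ^ k).mulVec (ψ s)) i
        = ∑ i, ((Matrix.diagonal o ^ k).mulVec (ψ t)) i := by
  intro k s t
  set M := Matrix.diagonal o ^ k with hM
  have hcommk : M * H = H * M := (Commute.pow_left hcomm k)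
  have key : ∀ u : ℝ, HasDerivAt (fun r => ∑ i, (M.mulVec (ψ r)) i) 0 u := by
    intro u
    have hcomp : ∀ j : Fin n, HasDerivAt (fun r => ψ r j) ((H.mulVec (ψ u)) j) u := by
      intro j
      exact (hasDerivAt_pi.mp (hψ u)) j
    have h1 : HasDerivAt (fun r => ∑ i, (M.mulVec (ψ r)) i)
        (∑ i, (M.mulVec (H.mulVec (ψ u))) i) u := by
      simp only [Matrix.mulVec, dotProduct]
      apply HasDerivAt.fun_sum
      intro i _
      apply HasDerivAt.fun_sum
      intro j _
      exact (hcomp j).const_mul (M i j)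
    have h2 : ∑ i, (M.mulVec (H.mulVec (ψ u))) i = 0 := by
      rw [show ∀ v, M.mulVec (H.mulVec v) = H.mulVec (M.mulVec v) from fun v => by
        rw [Matrix.mulVec_mulVec, Matrix.mulVec_mulVec, hcommk]]
      exact sumH_zero H hsum _
    rwa [h2] at h1
  have hdiff : Differentiable ℝ (fun r => ∑ i, (M.mulVec (ψ r)) i) :=
    fun u => (key u).differentiableAt
  have := is_const_of_deriv_eq_zero hdiff (fun u => (key u).deriv) s t
  exact this
end

section
/- (Stochastic Noether theorem, converse direction) Let H be an n×n infinitesimal stochastic matrix and O a diagonal real matrix. If for all j both ∑_i O_i H_{ij} = 0 and ∑_i O_i² H_{ij} = 0, then O commutes with H, i.e., OH = HO. Equivalently, (O_i − O_j) H_{ij} = 0 for all i, j. -/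
/-- Stochastic Noether theorem, converse direction: if the expected values of
`O` and `O²` are infinitesimally conserved, then `O` commutes with `H`. -/
theorem stochastic_noether_converse {n : ℕ} (H : Matrix (Fin n) (Fin n) ℝ)
    (hsum : ∀ j, ∑ i, H i j = 0)
    (hoff : ∀ i j, i ≠ j → 0 ≤ H i j)
    (o : Fin n → ℝ)
    (h1 : ∀ j, ∑ i, o i * H i j = 0)
    (h2 : ∀ j, ∑ i, (o i) ^ 2 * H i j = 0) :
    Matrix.diagonal o * H = H * Matrix.diagonal o ∧
      ∀ i j, (o i - o j) * H i j = 0 := by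
  have key : ∀ i j, (o i - o j) * H i j = 0 := by
    intro i j
    have hS : ∑ i, (o i - o j) ^ 2 * H i j = 0 := by
      have : ∑ i, (o i - o j) ^ 2 * H i j
          = (∑ i, (o i) ^ 2 * H i j) - 2 * o j * (∑ i, o i * H i j)
            + o j ^ 2 * (∑ i, H i j) := by
        rw [Finset.mul_sum, Finset.mul_sum, ← Finset.sum_sub_distrib,
          ← Finset.sum_add_distrib]
        exact Finset.sum_congr rfl fun i _ => by ring
      rw [this, h1 j, h2 j, hsum j]; ring
    have hnn : ∀ i ∈ Finset.univ, 0 ≤ (o i - o j) ^ 2 * H i j := by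
      intro i _
      rcases eq_or_ne i j with rfl | hij
      · simp
      · exact mul_nonneg (sq_nonneg _) (hoff i j hij)
    have := (Finset.sum_eq_zero_iff_of_nonneg hnn).mp hS i (Finset.mem_univ i)
    rcases mul_eq_zero.mp this with h | h
    · rw [pow_eq_zero_iff (two_ne_zero)] at h
      rw [h, zero_mul]
    · rw [h, mul_zero]
  refine ⟨?_, key⟩
  ext i j
  simp only [Matrix.mul_apply, Matrix.diagonal_apply]
  rw [Finset.sum_eq_single i (fun b _ hb => by simp [hb.symm]) (by simp),
    Finset.sum_eq_single j (fun b _ hb => by simp [hb]) (by simp)]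
  simp only [if_true, if_pos rfl]
  nlinarith [key i j]
end

section
/- (Noether theorem for Markov chains) Let U be an n×n stochastic matrix and O a diagonal real matrix. Then OU = UO if and only if for all j, ∑_i O_i U_{ij} = O_j and ∑_i O_i² U_{ij} = O_j². -/
/-- Noether theorem for Markov chains: a diagonal observable `O` commutes with
a stochastic matrix `U` iff the expected values of `O` and `O²` are preserved. -/
theorem noether_markov_chain {n : ℕ} (U : Matrix (Fin n) (Fin n) ℝ)
    (hU0 : ∀ i j, 0 ≤ U i j) (hU1 : ∀ j, ∑ i, U i j = 1)
    (o : Fin n → ℝ) :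
    Matrix.diagonal o * U = U * Matrix.diagonal o ↔
      ∀ j, (∑ i, o i * U i j = o j) ∧ (∑ i, (o i) ^ 2 * U i j = (o j) ^ 2) := by
  constructor
  · intro h j
    have key : ∀ i, o i * U i j = U i j * o j := by
      intro i
      have := congrFun (congrFun h i) j
      simpa [Matrix.diagonal_mul, Matrix.mul_diagonal] using this
    constructor
    · calc ∑ i, o i * U i j = ∑ i, U i j * o j := by
            exact Finset.sum_congr rfl fun i _ => key i
        _ = o j := by rw [← Finset.sum_mul, hU1 j, one_mul]
    · calc ∑ i, (o i) ^ 2 * U i j = ∑ i, U i j * o j ^ 2 := by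
            refine Finset.sum_congr rfl fun i _ => ?_
            calc (o i) ^ 2 * U i j = o i * (o i * U i j) := by ring
              _ = o i * (U i j * o j) := by rw [key i]
              _ = (o i * U i j) * o j := by ring
              _ = (U i j * o j) * o j := by rw [key i]
              _ = U i j * o j ^ 2 := by ring
        _ = o j ^ 2 := by rw [← Finset.sum_mul, hU1 j, one_mul]
  · intro h
    ext i j
    simp only [Matrix.diagonal_mul, Matrix.mul_diagonal]
    have sum0 : ∑ k, U k j * (o k - o j) ^ 2 = 0 := by
      have h1 := (h j).1
      have h2 := (h j).2
      have h3 := hU1 j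
      calc ∑ k, U k j * (o k - o j) ^ 2
          = ∑ k, ((o k) ^ 2 * U k j - 2 * o j * (o k * U k j) + o j ^ 2 * U k j) := by
            exact Finset.sum_congr rfl fun k _ => by ring
        _ = (∑ k, (o k) ^ 2 * U k j) - 2 * o j * (∑ k, o k * U k j)
              + o j ^ 2 * (∑ k, U k j) := by
            rw [Finset.sum_add_distrib, Finset.sum_sub_distrib, Finset.mul_sum,
              Finset.mul_sum]
        _ = 0 := by rw [h1, h2, h3]; ring
    have hz : U i j * (o i - o j) ^ 2 = 0 := by
      have := (Finset.sum_eq_zero_iff_of_nonneg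
        (fun k _ => mul_nonneg (hU0 k j) (sq_nonneg _))).mp sum0
      exact this i (Finset.mem_univ i)
    rcases mul_eq_zero.mp hz with h0 | h0
    · rw [h0, mul_zero, zero_mul]
    · have : o i = o j := by nlinarith [sq_nonneg (o i - o j)]
      rw [this, mul_comm]
end

section
/- (Complex balance implies equilibrium of the rate equation) Let T be a finite set of transitions, each τ ∈ T having a rate constant r(τ) > 0, input vector m(τ) ∈ ℕᵏ and output vector n(τ) ∈ ℕᵏ. Suppose c ∈ [0,∞)ᵏ is complex balanced: for every κ ∈ ℕᵏ, ∑_{τ : m(τ)=κ} r(τ) c^{m(τ)} = ∑_{τ : n(τ)=κ} r(τ) c^{m(τ)}. Then c is an equilibrium of the rate equation: ∑_{τ∈T} r(τ)(n(τ) − m(τ)) c^{m(τ)} = 0. -/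
open Finset

/-- Complex balance implies equilibrium of the rate equation. -/
theorem complexBalanced_equilibrium {k : ℕ} {T : Type*} [Fintype T]
    (r : T → ℝ) (hr : ∀ τ, 0 < r τ)
    (m n : T → (Fin k → ℕ))
    (c : Fin k → ℝ) (hc : ∀ i, 0 ≤ c i)
    (hbal : ∀ κ : Fin k → ℕ,
      ∑ τ ∈ univ.filter (fun τ => m τ = κ), r τ * ∏ i, c i ^ (m τ i)
        = ∑ τ ∈ univ.filter (fun τ => n τ = κ), r τ * ∏ i, c i ^ (m τ i)) :
    ∀ i : Fin k,
      ∑ τ, r τ * ((n τ i : ℝ) - (m τ i : ℝ)) * ∏ j, c j ^ (m τ j) = 0 := by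
  intro i
  set p : T → ℝ := fun τ => r τ * ∏ j, c j ^ (m τ j) with hp
  set S : Finset (Fin k → ℕ) := (univ.image m) ∪ (univ.image n) with hS
  have hmS : ∀ τ ∈ (univ : Finset T), m τ ∈ S := fun τ _ =>
    mem_union_left _ (mem_image_of_mem m (mem_univ τ))
  have hnS : ∀ τ ∈ (univ : Finset T), n τ ∈ S := fun τ _ =>
    mem_union_right _ (mem_image_of_mem n (mem_univ τ))
  have hA : ∑ τ, (n τ i : ℝ) * p τ
      = ∑ κ ∈ S, (κ i : ℝ) * ∑ τ ∈ univ.filter (fun τ => n τ = κ), p τ := by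
    rw [← sum_fiberwise_of_maps_to hnS (fun τ => (n τ i : ℝ) * p τ)]
    refine sum_congr rfl fun κ _ => ?_
    rw [mul_sum]
    refine sum_congr rfl fun τ hτ => ?_
    simp only [mem_filter] at hτ
    rw [hτ.2]
  have hB : ∑ τ, (m τ i : ℝ) * p τ
      = ∑ κ ∈ S, (κ i : ℝ) * ∑ τ ∈ univ.filter (fun τ => m τ = κ), p τ := by
    rw [← sum_fiberwise_of_maps_to hmS (fun τ => (m τ i : ℝ) * p τ)]
    refine sum_congr rfl fun κ _ => ?_
    rw [mul_sum]
    refine sum_congr rfl fun τ hτ => ?_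
    simp only [mem_filter] at hτ
    rw [hτ.2]
  have key : ∑ τ, (n τ i : ℝ) * p τ = ∑ τ, (m τ i : ℝ) * p τ := by
    rw [hA, hB]
    exact sum_congr rfl fun κ _ => by rw [hbal κ]
  have : ∑ τ, r τ * ((n τ i : ℝ) - (m τ i : ℝ)) * ∏ j, c j ^ (m τ j)
      = ∑ τ, ((n τ i : ℝ) * p τ - (m τ i : ℝ) * p τ) := by
    refine sum_congr rfl fun τ _ => ?_
    simp only [hp]; ring
  rw [this, sum_sub_distrib, key, sub_self]
end
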